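/- Let G be a weighted directed graph on vertex set V = {1,…,n} and let M_1 be the simple cyclic-triangle motif with vertices {1,2,3} and edge set E_M = {(1,2),(2,3),(3,1)}. Then the structural motif adjacency matrix of M_1 in G satisfies M^struc = (1/3)·(C + Cᵀ), where C = J_sᵀ ∘ (J_s G_s) + J_sᵀ ∘ (G_s J_s) + G_sᵀ ∘ (J_s J_s). -/
import Mathlib


open scoped Classical BigOperators Matrix

noncomputable section

/-- A motif on `m` vertices: a weakly connected loopless directed graph on the vertex set
`Fin m`, given by its edge set. -/
structure Motif (m : ℕ) where
  edges : Finset (Fin m × Fin m)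
  irrefl : ∀ e ∈ edges, e.1 ≠ e.2
  connected : (SimpleGraph.fromRel (fun u v => (u, v) ∈ edges)).Connected

variable {n m : ℕ}

/-- Edge set of the weighted directed graph with weight matrix `G`:
`E = {(i,j) : i ≠ j and G i j > 0}`. -/
def edgeFinset (G : Matrix (Fin n) (Fin n) ℝ) : Finset (Fin n × Fin n) :=
  Finset.univ.filter fun p => p.1 ≠ p.2 ∧ 0 < G p.1 p.2

/-- Directed-edge indicator matrix `J`. -/
def Jmat (G : Matrix (Fin n) (Fin n) ℝ) : Matrix (Fin n) (Fin n) ℝ :=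
  fun i j => if (i, j) ∈ edgeFinset G then 1 else 0

/-- Single-edge indicator matrix `J_s`. -/
def Jsmat (G : Matrix (Fin n) (Fin n) ℝ) : Matrix (Fin n) (Fin n) ℝ :=
  fun i j => if (i, j) ∈ edgeFinset G ∧ (j, i) ∉ edgeFinset G then 1 else 0

/-- Double-edge indicator matrix `J_d`. -/
def Jdmat (G : Matrix (Fin n) (Fin n) ℝ) : Matrix (Fin n) (Fin n) ℝ :=
  fun i j => if (i, j) ∈ edgeFinset G ∧ (j, i) ∈ edgeFinset G then 1 else 0

/-- Missing-edge indicator matrix `J_0`. -/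
def J0mat (G : Matrix (Fin n) (Fin n) ℝ) : Matrix (Fin n) (Fin n) ℝ :=
  fun i j => if (i, j) ∉ edgeFinset G ∧ (j, i) ∉ edgeFinset G ∧ i ≠ j then 1 else 0

/-- Vertex-distinct indicator matrix `J_n`. -/
def Jnmat (n : ℕ) : Matrix (Fin n) (Fin n) ℝ :=
  fun i j => if i ≠ j then 1 else 0

/-- Single-edge weighted matrix `G_s`. -/
def Gsmat (G : Matrix (Fin n) (Fin n) ℝ) : Matrix (Fin n) (Fin n) ℝ :=
  fun i j => if (i, j) ∈ edgeFinset G ∧ (j, i) ∉ edgeFinset G then G i j else 0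

/-- Double-edge weighted matrix `G_d`. -/
def Gdmat (G : Matrix (Fin n) (Fin n) ℝ) : Matrix (Fin n) (Fin n) ℝ :=
  fun i j => if (i, j) ∈ edgeFinset G ∧ (j, i) ∈ edgeFinset G then G i j + G j i else 0

/-- Entrywise (Hadamard) product of matrices. -/
def had (A B : Matrix (Fin n) (Fin n) ℝ) : Matrix (Fin n) (Fin n) ℝ :=
  fun i j => A i j * B i j

/-- Well-formedness of a candidate subgraph `H = (V_H, E_H)` of a graph on `Fin n`:
each edge joins two distinct vertices of `H`. -/
def IsGraphPair (H : Finset (Fin n) × Finset (Fin n × Fin n)) : Prop :=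
  ∀ e ∈ H.2, e.1 ∈ H.1 ∧ e.2 ∈ H.1 ∧ e.1 ≠ e.2

/-- `φ` is an isomorphism from the motif `M` onto the graph `H = (V_H, E_H)`. -/
def IsIso (M : Motif m) (H : Finset (Fin n) × Finset (Fin n × Fin n))
    (φ : Fin m → Fin n) : Prop :=
  Function.Injective φ ∧ Finset.image φ Finset.univ = H.1 ∧
    ∀ u v : Fin m, (u, v) ∈ M.edges ↔ (φ u, φ v) ∈ H.2

/-- `H` is a functional instance of motif `M` in the graph with weight matrix `G`,
i.e. `M ≅ H ≤ G`. -/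
def IsFuncInstance (M : Motif m) (G : Matrix (Fin n) (Fin n) ℝ)
    (H : Finset (Fin n) × Finset (Fin n × Fin n)) : Prop :=
  IsGraphPair H ∧ H.2 ⊆ edgeFinset G ∧ ∃ φ, IsIso M H φ

/-- `H` is a structural instance of motif `M` in the graph with weight matrix `G`,
i.e. `M ≅ H < G` (`H` an induced subgraph: `E_H = E ∩ (V_H × V_H)`). -/
def IsStrucInstance (M : Motif m) (G : Matrix (Fin n) (Fin n) ℝ)
    (H : Finset (Fin n) × Finset (Fin n × Fin n)) : Prop :=
  IsGraphPair H ∧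
    H.2 = (edgeFinset G).filter (fun e => e.1 ∈ H.1 ∧ e.2 ∈ H.1) ∧
    ∃ φ, IsIso M H φ

/-- `{i, j}` is an anchored pair of the instance `H`: there is an isomorphism `φ` from
`M` to `H` and distinct anchors `a, b ∈ A` with `φ a = i` and `φ b = j`. -/
def AnchoredPair (M : Motif m) (A : Finset (Fin m))
    (H : Finset (Fin n) × Finset (Fin n × Fin n)) (i j : Fin n) : Prop :=
  ∃ φ, IsIso M H φ ∧ ∃ a ∈ A, ∃ b ∈ A, a ≠ b ∧ φ a = i ∧ φ b = j

/-- The functional motif adjacency matrix of the motif `(M, A)` in the graph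
with weight matrix `G`. -/
def mamFunc (M : Motif m) (A : Finset (Fin m)) (G : Matrix (Fin n) (Fin n) ℝ) :
    Matrix (Fin n) (Fin n) ℝ :=
  fun i j => (1 / (M.edges.card : ℝ)) *
    ∑ H : Finset (Fin n) × Finset (Fin n × Fin n),
      if IsFuncInstance M G H ∧ AnchoredPair M A H i j then ∑ e ∈ H.2, G e.1 e.2 else 0

/-- The structural motif adjacency matrix of the motif `(M, A)` in the graph
with weight matrix `G`. -/
def mamStruc (M : Motif m) (A : Finset (Fin m)) (G : Matrix (Fin n) (Fin n) ℝ) :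
    Matrix (Fin n) (Fin n) ℝ :=
  fun i j => (1 / (M.edges.card : ℝ)) *
    ∑ H : Finset (Fin n) × Finset (Fin n × Fin n),
      if IsStrucInstance M G H ∧ AnchoredPair M A H i j then ∑ e ∈ H.2, G e.1 e.2 else 0


/-! ### Auxiliary definitions and lemmas -/

/-- `(a,b)` is a single edge: present, with reverse absent. -/
def single (G : Matrix (Fin n) (Fin n) ℝ) (a b : Fin n) : Prop :=
  (a, b) ∈ edgeFinset G ∧ (b, a) ∉ edgeFinset G

/-- The three single-edge conditions for the directed cycle `a → b → c → a`. -/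
def SCond (G : Matrix (Fin n) (Fin n) ℝ) (a b c : Fin n) : Prop :=
  single G a b ∧ single G b c ∧ single G c a

/-- The subgraph given by the directed cycle `a → b → c → a`. -/
def cycH (a b c : Fin n) : Finset (Fin n) × Finset (Fin n × Fin n) :=
  ({a, b, c}, {(a, b), (b, c), (c, a)})

lemma mem_edgeFinset {G : Matrix (Fin n) (Fin n) ℝ} {a b : Fin n} :
    (a, b) ∈ edgeFinset G ↔ a ≠ b ∧ 0 < G a b := by
  simp [edgeFinset]

lemma SCond.rot {G : Matrix (Fin n) (Fin n) ℝ} {a b c : Fin n} (h : SCond G a b c) :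
    SCond G b c a := ⟨h.2.1, h.2.2, h.1⟩

lemma SCond.ne {G : Matrix (Fin n) (Fin n) ℝ} {a b c : Fin n} (h : SCond G a b c) :
    a ≠ b ∧ b ≠ c ∧ a ≠ c := by
  refine ⟨(mem_edgeFinset.mp h.1.1).1, (mem_edgeFinset.mp h.2.1.1).1, ?_⟩
  intro hac
  subst hac
  exact h.2.1.2 h.1.1

lemma cycH_rot (a b c : Fin n) : cycH a b c = cycH b c a := by
  unfold cycH
  rw [Prod.ext_iff]
  constructor
  · ext x; simp only [Finset.mem_insert, Finset.mem_singleton]; tauto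
  · ext x; simp only [Finset.mem_insert, Finset.mem_singleton]; tauto

lemma clash {G : Matrix (Fin n) (Fin n) ℝ} {i j k k' : Fin n}
    (h1 : SCond G i j k) (h2 : SCond G i k' j) : False :=
  h2.2.2.2 h1.1.1

lemma cycH_inj3 {G : Matrix (Fin n) (Fin n) ℝ} {i j k k' : Fin n}
    (hS : SCond G i j k) (h : cycH i j k' = cycH i j k) : k = k' := by
  obtain ⟨hij, hjk, hik⟩ := hS.ne
  have hmem : ((j, k) : Fin n × Fin n) ∈ (cycH i j k').2 := by
    rw [h]; simp [cycH]
  simp only [cycH, Finset.mem_insert, Finset.mem_singleton, Prod.ext_iff] at hmem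
  rcases hmem with ⟨h1, _⟩ | ⟨_, h2⟩ | ⟨h1, h2⟩
  · exact absurd h1.symm hij
  · exact h2
  · exact absurd h2.symm hik

lemma cycH_inj2 {G : Matrix (Fin n) (Fin n) ℝ} {i j k k' : Fin n}
    (hS : SCond G i k j) (h : cycH i k' j = cycH i k j) : k = k' := by
  obtain ⟨hik, hkj, hij⟩ := hS.ne
  have hmem : ((i, k) : Fin n × Fin n) ∈ (cycH i k' j).2 := by
    rw [h]; simp [cycH]
  simp only [cycH, Finset.mem_insert, Finset.mem_singleton, Prod.ext_iff] at hmem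
  rcases hmem with ⟨_, h2⟩ | ⟨h1, h2⟩ | ⟨h1, h2⟩
  · exact h2
  · exact absurd h2 hkj
  · exact absurd h1 hij

lemma wsum (G : Matrix (Fin n) (Fin n) ℝ) {a b c : Fin n}
    (hab : a ≠ b) (hbc : b ≠ c) (hac : a ≠ c) :
    ∑ e ∈ (cycH a b c).2, G e.1 e.2 = G a b + G b c + G c a := by
  have h1 : ((a, b) : Fin n × Fin n) ∉ ({(b, c), (c, a)} : Finset (Fin n × Fin n)) := by
    simp only [Finset.mem_insert, Finset.mem_singleton, Prod.ext_iff, not_or]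
    exact ⟨fun h => hab h.1, fun h => hac h.1⟩
  have h2 : ((b, c) : Fin n × Fin n) ∉ ({(c, a)} : Finset (Fin n × Fin n)) := by
    simp only [Finset.mem_singleton, Prod.ext_iff, not_and]
    exact fun h => absurd h hbc
  show ∑ e ∈ ({(a, b), (b, c), (c, a)} : Finset (Fin n × Fin n)), G e.1 e.2 = _
  rw [Finset.sum_insert h1, Finset.sum_insert h2, Finset.sum_singleton]
  ring

lemma image_univ_fin3 (ψ : Fin 3 → Fin n) :
    Finset.image ψ Finset.univ = {ψ 0, ψ 1, ψ 2} := by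
  rw [show (Finset.univ : Finset (Fin 3)) = {0, 1, 2} from by decide]
  simp [Finset.image_insert]

lemma isIso_cycH {a b c : Fin n} (hab : a ≠ b) (hbc : b ≠ c) (hac : a ≠ c)
    (M1 : Motif 3) (hM : M1.edges = {((0 : Fin 3), 1), (1, 2), (2, 0)}) :
    IsIso M1 (cycH a b c) ![a, b, c] := by
  refine ⟨?_, ?_, ?_⟩
  · intro u v huv
    fin_cases u <;> fin_cases v <;>
      simp_all [hab, hbc, hac, hab.symm, hbc.symm, hac.symm]
  · rw [image_univ_fin3]
    simp [cycH]
  · intro u v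
    fin_cases u <;> fin_cases v <;>
      simp [hM, cycH, Prod.ext_iff, hab, hbc, hac,
        hab.symm, hbc.symm, hac.symm]

lemma strucInstance_cycH {G : Matrix (Fin n) (Fin n) ℝ} {a b c : Fin n}
    (hS : SCond G a b c)
    (M1 : Motif 3) (hM : M1.edges = {((0 : Fin 3), 1), (1, 2), (2, 0)}) :
    IsStrucInstance M1 G (cycH a b c) := by
  obtain ⟨hab, hbc, hac⟩ := hS.ne
  refine ⟨?_, ?_, ![a, b, c], isIso_cycH hab hbc hac M1 hM⟩
  · rintro ⟨x, y⟩ hxy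
    simp only [cycH, Finset.mem_insert, Finset.mem_singleton, Prod.ext_iff] at hxy
    rcases hxy with ⟨rfl, rfl⟩ | ⟨rfl, rfl⟩ | ⟨rfl, rfl⟩ <;>
      simp [cycH, hab, hbc, hac, hab.symm, hbc.symm, hac.symm]
  · ext ⟨x, y⟩
    simp only [cycH, Finset.mem_filter, Finset.mem_insert, Finset.mem_singleton,
      Prod.ext_iff]
    constructor
    · rintro (⟨rfl, rfl⟩ | ⟨rfl, rfl⟩ | ⟨rfl, rfl⟩)
      · exact ⟨hS.1.1, Or.inl rfl, Or.inr (Or.inl rfl)⟩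
      · exact ⟨hS.2.1.1, Or.inr (Or.inl rfl), Or.inr (Or.inr rfl)⟩
      · exact ⟨hS.2.2.1, Or.inr (Or.inr rfl), Or.inl rfl⟩
    · rintro ⟨hxy, hx, hy⟩
      have hneq := (mem_edgeFinset.mp hxy).1
      rcases hx with rfl | rfl | rfl <;> rcases hy with rfl | rfl | rfl
      · exact absurd rfl hneq
      · exact Or.inl ⟨rfl, rfl⟩
      · exact absurd hxy hS.2.2.2
      · exact absurd hxy hS.1.2
      · exact absurd rfl hneq
      · exact Or.inr (Or.inl ⟨rfl, rfl⟩)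
      · exact Or.inr (Or.inr ⟨rfl, rfl⟩)
      · exact absurd hxy hS.2.1.2
      · exact absurd rfl hneq

lemma char (G : Matrix (Fin n) (Fin n) ℝ)
    (M1 : Motif 3) (hM : M1.edges = {((0 : Fin 3), 1), (1, 2), (2, 0)})
    (i j : Fin n) (H : Finset (Fin n) × Finset (Fin n × Fin n)) :
    (IsStrucInstance M1 G H ∧ AnchoredPair M1 Finset.univ H i j) ↔
      ∃ k, (SCond G i j k ∧ H = cycH i j k) ∨ (SCond G i k j ∧ H = cycH i k j) := by
  constructor
  · rintro ⟨⟨hGP, hfil, -⟩, ψ, hiso, a, -, b, -, hab, ha, hb⟩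
    obtain ⟨hinj, himg, hiff⟩ := hiso
    have hne01 : ψ 0 ≠ ψ 1 := fun h => absurd (hinj h) (by decide)
    have hne12 : ψ 1 ≠ ψ 2 := fun h => absurd (hinj h) (by decide)
    have hne02 : ψ 0 ≠ ψ 2 := fun h => absurd (hinj h) (by decide)
    have hshape : H = cycH (ψ 0) (ψ 1) (ψ 2) := by
      rw [Prod.ext_iff]
      constructor
      · rw [← himg, image_univ_fin3]; rfl
      · ext ⟨x, y⟩
        constructor
        · intro hxy
          obtain ⟨hx1, hy1, -⟩ := hGP _ hxy
          rw [← himg] at hx1 hy1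
          obtain ⟨u, -, rfl⟩ := Finset.mem_image.mp hx1
          obtain ⟨v, -, rfl⟩ := Finset.mem_image.mp hy1
          have huv : (u, v) ∈ M1.edges := (hiff u v).mpr hxy
          rw [hM] at huv
          fin_cases u <;> fin_cases v <;> simp_all [cycH, Prod.ext_iff]
        · intro hxy
          simp only [cycH, Finset.mem_insert, Finset.mem_singleton, Prod.ext_iff] at hxy
          rcases hxy with ⟨rfl, rfl⟩ | ⟨rfl, rfl⟩ | ⟨rfl, rfl⟩
          · exact (hiff 0 1).mp (by rw [hM]; decide)
          · exact (hiff 1 2).mp (by rw [hM]; decide)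
          · exact (hiff 2 0).mp (by rw [hM]; decide)
    have hsingle : ∀ x y : Fin n, (x, y) ∈ H.2 → ((y, x) : Fin n × Fin n) ∉ H.2 →
        single G x y := by
      intro x y hxy hyx
      have hx : (x, y) ∈ edgeFinset G := by
        rw [hfil] at hxy; exact (Finset.mem_filter.mp hxy).1
      obtain ⟨hxV, hyV, -⟩ := hGP _ hxy
      exact ⟨hx, fun hrev => hyx (by
        rw [hfil]; exact Finset.mem_filter.mpr ⟨hrev, hyV, hxV⟩)⟩
    have e01 : ((ψ 0, ψ 1) : Fin n × Fin n) ∈ H.2 := by rw [hshape]; simp [cycH]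
    have e12 : ((ψ 1, ψ 2) : Fin n × Fin n) ∈ H.2 := by rw [hshape]; simp [cycH]
    have e20 : ((ψ 2, ψ 0) : Fin n × Fin n) ∈ H.2 := by rw [hshape]; simp [cycH]
    have r10 : ((ψ 1, ψ 0) : Fin n × Fin n) ∉ H.2 := by
      rw [hshape]
      simp [cycH, Prod.ext_iff, hne01, hne12, hne02,
        hne01.symm, hne12.symm, hne02.symm]
    have r21 : ((ψ 2, ψ 1) : Fin n × Fin n) ∉ H.2 := by
      rw [hshape]
      simp [cycH, Prod.ext_iff, hne01, hne12, hne02,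
        hne01.symm, hne12.symm, hne02.symm]
    have r02 : ((ψ 0, ψ 2) : Fin n × Fin n) ∉ H.2 := by
      rw [hshape]
      simp [cycH, Prod.ext_iff, hne01, hne12, hne02,
        hne01.symm, hne12.symm, hne02.symm]
    have hS : SCond G (ψ 0) (ψ 1) (ψ 2) :=
      ⟨hsingle _ _ e01 r10, hsingle _ _ e12 r21, hsingle _ _ e20 r02⟩
    have hcases : ∀ x y : Fin 3, x ≠ y →
        (x = 0 ∧ y = 1) ∨ (x = 0 ∧ y = 2) ∨ (x = 1 ∧ y = 0) ∨
        (x = 1 ∧ y = 2) ∨ (x = 2 ∧ y = 0) ∨ (x = 2 ∧ y = 1) := by decide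
    subst ha; subst hb
    rcases hcases a b hab with ⟨rfl, rfl⟩ | ⟨rfl, rfl⟩ | ⟨rfl, rfl⟩ | ⟨rfl, rfl⟩ |
      ⟨rfl, rfl⟩ | ⟨rfl, rfl⟩
    · exact ⟨ψ 2, Or.inl ⟨hS, hshape⟩⟩
    · exact ⟨ψ 1, Or.inr ⟨hS, hshape⟩⟩
    · exact ⟨ψ 2, Or.inr ⟨hS.rot, hshape.trans (cycH_rot _ _ _)⟩⟩
    · exact ⟨ψ 0, Or.inl ⟨hS.rot, hshape.trans (cycH_rot _ _ _)⟩⟩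
    · exact ⟨ψ 1, Or.inl ⟨hS.rot.rot, hshape.trans ((cycH_rot _ _ _).trans (cycH_rot _ _ _))⟩⟩
    · exact ⟨ψ 0, Or.inr ⟨hS.rot.rot, hshape.trans ((cycH_rot _ _ _).trans (cycH_rot _ _ _))⟩⟩
  · rintro ⟨k, ⟨hS, rfl⟩ | ⟨hS, rfl⟩⟩
    · obtain ⟨hij, hjk, hik⟩ := hS.ne
      exact ⟨strucInstance_cycH hS M1 hM,
        ![i, j, k], isIso_cycH hij hjk hik M1 hM,
        0, Finset.mem_univ _, 1, Finset.mem_univ _, by decide, by simp, by simp⟩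
    · obtain ⟨hik, hkj, hij⟩ := hS.ne
      exact ⟨strucInstance_cycH hS M1 hM,
        ![i, k, j], isIso_cycH hik hkj hij M1 hM,
        0, Finset.mem_univ _, 2, Finset.mem_univ _, by decide, by simp, by simp⟩

lemma term_eq (G : Matrix (Fin n) (Fin n) ℝ) (a b c : Fin n) :
    Jsmat G c a * (Jsmat G a b * Gsmat G b c) + Jsmat G c a * (Gsmat G a b * Jsmat G b c) +
      Gsmat G c a * (Jsmat G a b * Jsmat G b c) =
    if SCond G a b c then G a b + G b c + G c a else 0 := by
  unfold Jsmat Gsmat SCond single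
  by_cases h1 : (a, b) ∈ edgeFinset G ∧ (b, a) ∉ edgeFinset G <;>
    by_cases h2 : (b, c) ∈ edgeFinset G ∧ (c, b) ∉ edgeFinset G <;>
      by_cases h3 : (c, a) ∈ edgeFinset G ∧ (a, c) ∉ edgeFinset G <;>
        simp [h1, h2, h3] <;> ring

/-- **Structural MAM formula for the cyclic triangle motif `M₁`.** -/
theorem mam_M1_struc
    (G : Matrix (Fin n) (Fin n) ℝ)
    (hpos : ∀ i j, 0 ≤ G i j) (hdiag : ∀ i, G i i = 0)
    (M1 : Motif 3) (hM : M1.edges = {((0 : Fin 3), 1), (1, 2), (2, 0)}) :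
    mamStruc M1 Finset.univ G =
      (1 / 3 : ℝ) •
        (had (Jsmat G)ᵀ (Jsmat G * Gsmat G) + had (Jsmat G)ᵀ (Gsmat G * Jsmat G) +
          had (Gsmat G)ᵀ (Jsmat G * Jsmat G) +
          (had (Jsmat G)ᵀ (Jsmat G * Gsmat G) + had (Jsmat G)ᵀ (Gsmat G * Jsmat G) +
            had (Gsmat G)ᵀ (Jsmat G * Jsmat G))ᵀ) := by
  classical
  have hcard3 : ({((0 : Fin 3), 1), (1, 2), (2, 0)} : Finset (Fin 3 × Fin 3)).card = 3 := by
    decide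
  ext i j
  simp only [mamStruc, Matrix.smul_apply, Matrix.add_apply, Matrix.transpose_apply, had,
    Matrix.mul_apply, smul_eq_mul]
  rw [hM, hcard3]
  have key : ∀ H : Finset (Fin n) × Finset (Fin n × Fin n),
      (if IsStrucInstance M1 G H ∧ AnchoredPair M1 Finset.univ H i j
        then ∑ e ∈ H.2, G e.1 e.2 else 0)
      = ∑ k : Fin n,
          ((if H = cycH i j k ∧ SCond G i j k then ∑ e ∈ H.2, G e.1 e.2 else 0) +
           (if H = cycH i k j ∧ SCond G i k j then ∑ e ∈ H.2, G e.1 e.2 else 0)) := by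
    intro H
    by_cases hP : IsStrucInstance M1 G H ∧ AnchoredPair M1 Finset.univ H i j
    · obtain ⟨k0, hk0⟩ := (char G M1 hM i j H).mp hP
      rw [if_pos hP]
      rcases hk0 with ⟨hS, rfl⟩ | ⟨hS, rfl⟩
      · symm
        rw [Finset.sum_eq_single_of_mem k0 (Finset.mem_univ _) ?side]
        · rw [if_pos ⟨rfl, hS⟩, if_neg (fun hh => clash hS hh.2), add_zero]
        case side =>
          intro k _ hk
          rw [if_neg (fun hh => hk (cycH_inj3 hh.2 hh.1)),
            if_neg (fun hh => clash hS hh.2), add_zero]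
      · symm
        rw [Finset.sum_eq_single_of_mem k0 (Finset.mem_univ _) ?side]
        · rw [if_neg (fun hh => clash hh.2 hS), if_pos ⟨rfl, hS⟩, zero_add]
        case side =>
          intro k _ hk
          rw [if_neg (fun hh => clash hh.2 hS),
            if_neg (fun hh => hk (cycH_inj2 hh.2 hh.1)), add_zero]
    · rw [if_neg hP]
      symm
      refine Finset.sum_eq_zero fun k _ => ?_
      rw [if_neg (fun hh => hP ((char G M1 hM i j H).mpr ⟨k, Or.inl ⟨hh.2, hh.1⟩⟩)),
        if_neg (fun hh => hP ((char G M1 hM i j H).mpr ⟨k, Or.inr ⟨hh.2, hh.1⟩⟩)), add_zero]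
  rw [Finset.sum_congr rfl (fun H _ => key H), Finset.sum_comm]
  have eval1 : ∀ k : Fin n,
      (∑ H : Finset (Fin n) × Finset (Fin n × Fin n),
        (if H = cycH i j k ∧ SCond G i j k then ∑ e ∈ H.2, G e.1 e.2 else 0))
      = if SCond G i j k then G i j + G j k + G k i else 0 := by
    intro k
    by_cases hS : SCond G i j k
    · obtain ⟨h1, h2, h3⟩ := hS.ne
      simp only [hS, and_true]
      rw [Finset.sum_ite_eq' Finset.univ (cycH i j k) (fun H => ∑ e ∈ H.2, G e.1 e.2),
        if_pos (Finset.mem_univ _), wsum G h1 h2 h3]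
      simp
    · simp [hS]
  have eval2 : ∀ k : Fin n,
      (∑ H : Finset (Fin n) × Finset (Fin n × Fin n),
        (if H = cycH i k j ∧ SCond G i k j then ∑ e ∈ H.2, G e.1 e.2 else 0))
      = if SCond G i k j then G i k + G k j + G j i else 0 := by
    intro k
    by_cases hS : SCond G i k j
    · obtain ⟨h1, h2, h3⟩ := hS.ne
      simp only [hS, and_true]
      rw [Finset.sum_ite_eq' Finset.univ (cycH i k j) (fun H => ∑ e ∈ H.2, G e.1 e.2),
        if_pos (Finset.mem_univ _), wsum G h1 h2 h3]
      simp
    · simp [hS]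
  have hsum : ∀ k : Fin n,
      (∑ H : Finset (Fin n) × Finset (Fin n × Fin n),
        ((if H = cycH i j k ∧ SCond G i j k then ∑ e ∈ H.2, G e.1 e.2 else 0) +
         (if H = cycH i k j ∧ SCond G i k j then ∑ e ∈ H.2, G e.1 e.2 else 0)))
      = (if SCond G i j k then G i j + G j k + G k i else 0) +
        (if SCond G i k j then G i k + G k j + G j i else 0) := by
    intro k
    rw [Finset.sum_add_distrib, eval1 k, eval2 k]
  rw [Finset.sum_congr rfl (fun k _ => hsum k), Finset.sum_add_distrib]
  have hA : Jsmat G j i * ∑ k : Fin n, Jsmat G i k * Gsmat G k j +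
        Jsmat G j i * ∑ k : Fin n, Gsmat G i k * Jsmat G k j +
        Gsmat G j i * ∑ k : Fin n, Jsmat G i k * Jsmat G k j
      = ∑ k : Fin n, (if SCond G i k j then G i k + G k j + G j i else 0) := by
    simp only [Finset.mul_sum]
    rw [← Finset.sum_add_distrib, ← Finset.sum_add_distrib]
    exact Finset.sum_congr rfl fun k _ => term_eq G i k j
  have hB : Jsmat G i j * ∑ k : Fin n, Jsmat G j k * Gsmat G k i +
        Jsmat G i j * ∑ k : Fin n, Gsmat G j k * Jsmat G k i +
        Gsmat G i j * ∑ k : Fin n, Jsmat G j k * Jsmat G k i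
      = ∑ k : Fin n, (if SCond G i j k then G i j + G j k + G k i else 0) := by
    simp only [Finset.mul_sum]
    rw [← Finset.sum_add_distrib, ← Finset.sum_add_distrib]
    refine Finset.sum_congr rfl fun k _ => ?_
    rw [term_eq G j k i]
    by_cases h : SCond G i j k
    · rw [if_pos h.rot, if_pos h]; ring
    · rw [if_neg (fun hh => h hh.rot.rot), if_neg h]
  rw [hA, hB]
  push_cast
  ring
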